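/- arXiv:1801.05979 — 3 statements merged into one kernel-verified Lean document; each statement's English description precedes it below -/
import Mathlib

section
/- Let C be a skeletally small abelian category and S a Serre subcategory of C. An object T of C is a simple object of the Gabriel quotient category C/S if and only if T is S-simple, i.e. T does not belong to S and for every subobject T' of T in C either T' belongs to S or T/T' belongs to S. -/
open CategoryTheory Limits

universe v u v₂ u₂

namespace KGPaper

variable {C : Type u} [Category.{v} C] [Abelian C]

/-- A Serre subcategory of an abelian category, given as a predicate on objects:
it contains the zero objects and, for any short exact sequence, the middle term
satisfies the predicate iff the outer terms do. -/
structure IsSerre {C : Type u} [Category.{v} C] [Abelian C] (P : C → Prop) : Prop where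
  zero : ∀ X : C, IsZero X → P X
  ses : ∀ S : ShortComplex C, S.ShortExact → (P S.X₂ ↔ P S.X₁ ∧ P S.X₃)

/-- The class of `P`-isomorphisms: morphisms whose kernel and cokernel satisfy `P`.
The Gabriel quotient `C/P` is (2-universally) the localization of `C` at this class. -/
def serreW {C : Type u} [Category.{v} C] [Abelian C] (P : C → Prop) :
    MorphismProperty C :=
  fun _ _ f => P (kernel f) ∧ P (cokernel f)

/-- An object `T` is `P`-simple (`S`-simple for the Serre subcategory `S = P`) if
`T ∉ P` and for every subobject `T'` of `T`, either `T' ∈ P` or `T/T' ∈ P`. -/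
def IsRelSimple {C : Type u} [Category.{v} C] [Abelian C] (P : C → Prop) (T : C) : Prop :=
  ¬ P T ∧ ∀ T' : Subobject T, P (T' : C) ∨ P (cokernel T'.arrow)

/-- There is a chain of subobjects `0 = T₀ ⊆ T₁ ⊆ ... ⊆ Tₙ = T` all of whose successive
quotients `T_{i+1}/T_i` satisfy the predicate `Q`. -/
def HasChainWith {C : Type u} [Category.{v} C] [Abelian C] (Q : C → Prop) (T : C) : Prop :=
  ∃ (n : ℕ) (c : Fin (n + 1) → Subobject T) (hc : ∀ i : Fin n, c i.castSucc ≤ c i.succ),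
    c 0 = ⊥ ∧ c (Fin.last n) = ⊤ ∧
    ∀ i : Fin n, Q (cokernel (Subobject.ofLE _ _ (hc i)))

/-- An object of an abelian category has finite length if it has a composition series,
i.e. a finite chain of subobjects with simple successive quotients. -/
def FiniteLength {C : Type u} [Category.{v} C] [Abelian C] (T : C) : Prop :=
  HasChainWith (fun Z => Simple Z) T

end KGPaper

namespace KGPaper

/-- `T : C` becomes a simple object in the Gabriel quotient `C/P`: there is an
abelian category `D` together with an exact localization functor `q : C ⥤ D`
at the class of `P`-isomorphisms (this is, up to equivalence, the Gabriel
quotient together with its quotient functor) such that `q.obj T` is simple. -/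
def SimpleInQuotient {C : Type u} [Category.{v} C] [Abelian C] (P : C → Prop) (T : C) : Prop :=
  ∃ (D : Type (max u v)) (_ : Category.{max u v} D) (_ : Abelian D)
    (q : C ⥤ D) (_ : q.Additive) (_ : PreservesFiniteLimits q)
    (_ : PreservesFiniteColimits q) (_ : q.IsLocalization (serreW P)),
      Simple (q.obj T)

/-- `T : C` has finite length in the Gabriel quotient `C/P`. -/
def FiniteLengthInQuotient {C : Type u} [Category.{v} C] [Abelian C] (P : C → Prop)
    (T : C) : Prop :=
  ∃ (D : Type (max u v)) (_ : Category.{max u v} D) (_ : Abelian D)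
    (q : C ⥤ D) (_ : q.Additive) (_ : PreservesFiniteLimits q)
    (_ : PreservesFiniteColimits q) (_ : q.IsLocalization (serreW P)),
      FiniteLength (q.obj T)

/-- The Krull-Gabriel filtration of an abelian category `C`:
`C_{-1} = 0` (the zero objects) and `C_{n+1}` consists of the objects of finite
length in the Gabriel quotient `C/C_n`.  Here `kgFilt C n` is `C_n` for `n : ℕ`,
so `kgFilt C 0` consists of the objects of finite length in `C ≅ C/C_{-1}`. -/
def kgFilt (C : Type u) [Category.{v} C] [Abelian C] : ℕ → (C → Prop)
  | 0 => FiniteLengthInQuotient (fun X : C => IsZero X)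
  | n + 1 => FiniteLengthInQuotient (kgFilt C n)

/-- The Krull-Gabriel filtration indexed by `ℕ ∪ {-1}`, where the index `m : ℕ`
stands for `n = m - 1`; thus `kgFiltM C 0` is `C_{-1} = 0` and
`kgFiltM C (n+1)` is `C_n`. -/
def kgFiltM (C : Type u) [Category.{v} C] [Abelian C] : ℕ → (C → Prop)
  | 0 => fun X : C => IsZero X
  | n + 1 => kgFilt C n

/-- The Krull-Gabriel dimension of an abelian category `C`: the least `n : ℕ` with
`C_n = C` if such an `n` exists, and `∞` (here `⊤ : ℕ∞`) otherwise. -/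
noncomputable def kgDim (C : Type u) [Category.{v} C] [Abelian C] : ℕ∞ :=
  sInf ((fun m : ℕ => (m : ℕ∞)) '' { m : ℕ | ∀ T : C, kgFilt C m T })

end KGPaper

namespace KGPaper


section SerreAux

variable {C : Type u} [Category.{v} C] [Abelian C] {P : C → Prop}

open CategoryTheory.Abelian.Pseudoelement in
/-- The Ore condition square, built from the cokernel of `biprod.lift s f`. -/
lemma ore_aux {X₀ X Y : C} (s : X₀ ⟶ X) (f : X₀ ⟶ Y) :
    ∃ (Q : C) (g : X ⟶ Q) (t : Y ⟶ Q) (κ : kernel s ⟶ kernel t)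
      (e : cokernel s ≅ cokernel t), Epi κ ∧ f ≫ t = s ≫ g := by
  classical
  set h : X₀ ⟶ X ⊞ Y := biprod.lift s f with hh
  set π := cokernel.π h with hπ
  have hsum : (s ≫ biprod.inl + f ≫ biprod.inr) ≫ π = 0 := by
    rw [← biprod.lift_eq]; exact cokernel.condition h
  simp only [Preadditive.add_comp, Category.assoc] at hsum
  have h0 : (kernel.ι s ≫ f) ≫ biprod.inr ≫ π = 0 := by
    rw [Category.assoc, eq_neg_of_add_eq_zero_right hsum]
    simp [reassoc_of% (kernel.condition s)]
  set t : Y ⟶ cokernel h := biprod.inr ≫ π with ht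
  set κ : kernel s ⟶ kernel t := kernel.lift t (kernel.ι s ≫ f) h0 with hκ
  -- the iso of cokernels
  have hδ0 : h ≫ biprod.desc (cokernel.π s) 0 = 0 := by
    rw [hh, biprod.lift_desc]; simp
  set δ : cokernel h ⟶ cokernel s := cokernel.desc h (biprod.desc (cokernel.π s) 0) hδ0 with hδ
  have hβ0 : t ≫ δ = 0 := by rw [ht, Category.assoc, hδ, cokernel.π_desc]; simp
  set β : cokernel t ⟶ cokernel s := cokernel.desc t δ hβ0 with hβ
  have hα0 : s ≫ biprod.inl ≫ π ≫ cokernel.π t = 0 := by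
    have h1 := congrArg (fun z => z ≫ cokernel.π t) (eq_neg_of_add_eq_zero_left hsum)
    simpa using h1
  set α : cokernel s ⟶ cokernel t := cokernel.desc s (biprod.inl ≫ π ≫ cokernel.π t) hα0 with hα
  have hαβ : α ≫ β = 𝟙 _ := by
    rw [← cancel_epi (cokernel.π s)]
    simp [hα, hβ, hδ, hπ]
  have hc : biprod.inr ≫ cokernel.π h ≫ cokernel.π t = 0 := by
    rw [← Category.assoc]; exact cokernel.condition t
  have hβα : β ≫ α = 𝟙 _ := by
    rw [← cancel_epi (cokernel.π t), ← cancel_epi π]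
    apply biprod.hom_ext' <;>
      simp [hα, hβ, hδ, hπ, ht, reassoc_of% (cokernel.condition t), hc]
  -- epi κ
  have hepi : Epi κ := by
    apply epi_of_pseudo_surjective
    intro b
    set y := pseudoApply (kernel.ι t) b with hy
    have ht0 : pseudoApply t y = 0 := by
      rw [hy, ← Abelian.Pseudoelement.comp_apply, kernel.condition, Abelian.Pseudoelement.zero_apply]
    have hπ0 : pseudoApply π (pseudoApply biprod.inr y) = 0 := by
      rw [← Abelian.Pseudoelement.comp_apply]; exact ht0
    obtain ⟨x, hx⟩ := pseudo_exact_of_exact (ShortComplex.exact_cokernel h)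
      (pseudoApply biprod.inr y) hπ0
    dsimp only [ShortComplex.mk] at hx
    have hsx : pseudoApply s x = 0 := by
      rw [show s = h ≫ biprod.fst from (biprod.lift_fst s f).symm, Abelian.Pseudoelement.comp_apply, hx,
        ← Abelian.Pseudoelement.comp_apply, biprod.inr_fst, Abelian.Pseudoelement.zero_apply]
    obtain ⟨a, ha⟩ := pseudo_exact_of_exact (ShortComplex.exact_kernel s) x hsx
    dsimp only [ShortComplex.mk] at ha
    have hfx : pseudoApply f x = y := by
      rw [show f = h ≫ biprod.snd from (biprod.lift_snd s f).symm, Abelian.Pseudoelement.comp_apply, hx,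
        ← Abelian.Pseudoelement.comp_apply, biprod.inr_snd]
      exact Quotient.inductionOn y fun a => by
        erw [Abelian.Pseudoelement.pseudoApply_mk']
        exact Quotient.sound ⟨a.left, 𝟙 _, 𝟙 _, inferInstance, inferInstance, by simp⟩
    refine ⟨a, pseudo_injective_of_mono (kernel.ι t) ?_⟩
    rw [← Abelian.Pseudoelement.comp_apply, hκ, kernel.lift_ι, Abelian.Pseudoelement.comp_apply, ha, hfx, hy]
  exact ⟨cokernel h, -(biprod.inl ≫ π), t, κ, ⟨α, β, hαβ, hβα⟩, hepi, by
    rw [Preadditive.comp_neg]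
    exact eq_neg_of_add_eq_zero_right hsum⟩


lemma sesMono {A B : C} (i : A ⟶ B) [Mono i] :
    (ShortComplex.mk i (cokernel.π i) (cokernel.condition i)).ShortExact :=
  { exact := ShortComplex.exact_cokernel i }

lemma sesEpi {A B : C} (p : A ⟶ B) [Epi p] :
    (ShortComplex.mk (kernel.ι p) p (kernel.condition p)).ShortExact :=
  { exact := ShortComplex.exact_kernel p }

variable (hP : IsSerre P)
include hP

lemma pIso {X Y : C} (e : X ≅ Y) (h : P X) : P Y := by
  have hz : P (cokernel e.hom) :=
    hP.zero _ ((isZero_zero C).of_iso (cokernel.ofEpi e.hom))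
  exact (hP.ses _ (sesMono e.hom)).mpr ⟨h, hz⟩

lemma pSub {A B : C} (i : A ⟶ B) [Mono i] (h : P B) : P A :=
  ((hP.ses _ (sesMono i)).mp h).1

lemma pQuot {A B : C} (p : A ⟶ B) [Epi p] (h : P A) : P B :=
  ((hP.ses _ (sesEpi p)).mp h).2

lemma pOfKer {A B : C} (u : A ⟶ B) (h1 : P (kernel u)) (h2 : P B) : P A := by
  have him : P (Limits.image u) := pSub hP (Limits.image.ι u) h2
  have hco : P (cokernel (kernel.ι u)) := pIso hP (Abelian.coimageIsoImage' u).symm him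
  exact (hP.ses _ (sesMono (kernel.ι u))).mpr ⟨h1, hco⟩

lemma pOfCoker {A B : C} (u : A ⟶ B) (h1 : P A) (h2 : P (cokernel u)) : P B := by
  have him : P (Abelian.image u) :=
    pIso hP (Abelian.coimageIsoImage u) (pQuot hP (cokernel.π (kernel.ι u)) h1)
  have e1 : cokernel (Abelian.image.ι u) ≅ cokernel u :=
    (cokernelEpiComp (Abelian.factorThruImage u) (Abelian.image.ι u)).symm ≪≫
      cokernelIsoOfEq (Abelian.image.fac u)
  exact (hP.ses _ (sesMono (Abelian.image.ι u))).mpr ⟨him, pIso hP e1.symm h2⟩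

lemma wOfIso {X Y : C} (f : X ⟶ Y) [IsIso f] : serreW P f :=
  ⟨hP.zero _ ((isZero_zero C).of_iso (kernel.ofMono f)),
   hP.zero _ ((isZero_zero C).of_iso (cokernel.ofEpi f))⟩

lemma wComp {X Y Z : C} (f : X ⟶ Y) (g : Y ⟶ Z) (hf : serreW P f) (hg : serreW P g) :
    serreW P (f ≫ g) := by
  constructor
  · -- kernel part
    set φ : kernel (f ≫ g) ⟶ kernel g :=
      kernel.lift g (kernel.ι (f ≫ g) ≫ f) (by rw [Category.assoc, kernel.condition]) with hφ
    refine pOfKer hP φ ?_ hg.1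
    have e : kernel φ ≅ kernel (kernel.ι (f ≫ g) ≫ f) :=
      (kernelCompMono φ (kernel.ι g)).symm ≪≫ kernelIsoOfEq (by simp [hφ])
    set ψ : kernel (kernel.ι (f ≫ g) ≫ f) ⟶ kernel f :=
      kernel.lift f (kernel.ι (kernel.ι (f ≫ g) ≫ f) ≫ kernel.ι (f ≫ g))
        (by rw [Category.assoc]; exact kernel.condition _) with hψ
    have hm : Mono (ψ ≫ kernel.ι f) := by
      rw [hψ, kernel.lift_ι]; infer_instance
    have : Mono ψ := mono_of_mono ψ (kernel.ι f)
    exact pIso hP e.symm (pSub hP ψ hf.1)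
  · -- cokernel part
    set u : cokernel f ⟶ cokernel (f ≫ g) :=
      cokernel.desc f (g ≫ cokernel.π (f ≫ g))
        (by rw [← Category.assoc]; exact cokernel.condition _) with hu
    refine pOfCoker hP u hf.2 ?_
    have e : cokernel u ≅ cokernel (g ≫ cokernel.π (f ≫ g)) :=
      (cokernelEpiComp (cokernel.π f) u).symm ≪≫ cokernelIsoOfEq (by simp [hu])
    set v : cokernel g ⟶ cokernel (g ≫ cokernel.π (f ≫ g)) :=
      cokernel.desc g (cokernel.π (f ≫ g) ≫ cokernel.π (g ≫ cokernel.π (f ≫ g)))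
        (by rw [← Category.assoc]; exact cokernel.condition _) with hv
    have he : Epi (cokernel.π g ≫ v) := by
      rw [hv, cokernel.π_desc]; infer_instance
    have : Epi v := epi_of_epi (cokernel.π g) v
    exact pIso hP e.symm (pQuot hP v hg.2)


lemma isMult : (serreW P).IsMultiplicative where
  id_mem X := wOfIso hP _
  comp_mem f g hf hg := wComp hP f g hf hg

lemma hasLCF : (serreW P).HasLeftCalculusOfFractions where
  toIsMultiplicative := isMult hP
  exists_leftFraction X Y φ := by
    obtain ⟨Q, g, t, κ, e, hκ, hsq⟩ := ore_aux φ.s φ.f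
    have hWt : serreW P t := by
      haveI := hκ
      exact ⟨pQuot hP κ φ.hs.1, pIso hP e φ.hs.2⟩
    exact ⟨MorphismProperty.LeftFraction.mk g t hWt, hsq⟩
  ext X' X Y f₁ f₂ s hs hsf := by
    have hu : s ≫ (f₁ - f₂) = 0 := by rw [Preadditive.comp_sub, hsf, sub_self]
    set v : cokernel s ⟶ Y := cokernel.desc s (f₁ - f₂) hu with hv
    refine ⟨cokernel v, cokernel.π v, ⟨?_, ?_⟩, ?_⟩
    · exact pIso hP (Abelian.coimageIsoImage v)
        (pQuot hP (cokernel.π (kernel.ι v)) hs.2)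
    · exact hP.zero _ ((isZero_zero C).of_iso (cokernel.ofEpi (cokernel.π v)))
    · have hz : (f₁ - f₂) ≫ cokernel.π v = 0 := by
        rw [← cokernel.π_desc s (f₁ - f₂) hu, ← hv, Category.assoc,
          cokernel.condition, comp_zero]
      rw [← sub_eq_zero, ← Preadditive.sub_comp]
      exact hz

variable {D : Type u₂} [Category.{v₂} D] [Preadditive D]
  (q : C ⥤ D) [q.Additive] [q.IsLocalization (serreW P)]

lemma isZero_q_iff (X : C) : IsZero (q.obj X) ↔ P X := by
  haveI := hasLCF hP
  constructor
  · intro h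
    have heq : q.map (𝟙 X) = q.map (0 : X ⟶ X) := h.eq_of_src _ _
    rw [MorphismProperty.map_eq_iff_postcomp q (serreW P)] at heq
    obtain ⟨Z, tt, htt, fac⟩ := heq
    have h0 : tt = 0 := by simpa using fac
    rw [h0] at htt
    exact pIso hP kernelZeroIsoSource htt.1
  · intro h
    have w0 : serreW P (0 : X ⟶ X) :=
      ⟨pIso hP kernelZeroIsoSource.symm h, pIso hP cokernelZeroIsoTarget.symm h⟩
    have hi : IsIso (q.map (0 : X ⟶ X)) := Localization.inverts q (serreW P) _ w0
    rw [q.map_zero] at hi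
    rw [IsZero.iff_id_eq_zero]
    rw [← IsIso.inv_hom_id (0 : q.obj X ⟶ q.obj X), comp_zero]


end SerreAux

/-- Let `C` be a skeletally small abelian category and `S` (here the
predicate `P`) a Serre subcategory of `C`.  Let `q : C ⥤ D` be the Gabriel quotient
functor onto the quotient category `C/S` (an abelian category, realized as the exact
localization of `C` at the class of `S`-isomorphisms).  An object `T` of `C` is a
simple object of `C/S` if and only if `T` is `S`-simple, i.e. `T ∉ S` and for every
subobject `T'` of `T` in `C` either `T' ∈ S` or `T/T' ∈ S`. -/
theorem simple_in_serre_quotient_iff_relSimple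
    {C : Type u} [Category.{v} C] [Abelian C] [EssentiallySmall.{v} C]
    {D : Type u₂} [Category.{v₂} D] [Abelian D]
    (P : C → Prop) (hP : IsSerre P)
    (q : C ⥤ D) [q.Additive] [PreservesFiniteLimits q] [PreservesFiniteColimits q]
    (hq : q.IsLocalization (serreW P))
    (T : C) :
    Simple (q.obj T) ↔ IsRelSimple P T := by
  haveI := hasLCF hP
  constructor
  · intro hs
    constructor
    · intro h
      exact Simple.not_isZero (q.obj T) ((isZero_q_iff hP q T).mpr h)
    · intro T'
      by_cases h0 : q.map T'.arrow = 0
      · left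
        refine (isZero_q_iff hP q _).mp ?_
        rw [IsZero.iff_id_eq_zero]
        haveI : Mono (q.map T'.arrow) := inferInstance
        rw [← cancel_mono (q.map T'.arrow), h0, Category.id_comp, zero_comp]
      · right
        haveI : Mono (q.map T'.arrow) := inferInstance
        haveI : IsIso (q.map T'.arrow) :=
          (Simple.mono_isIso_iff_nonzero (q.map T'.arrow)).mpr h0
        refine (isZero_q_iff hP q _).mp ?_
        have h1 : IsZero (cokernel (q.map T'.arrow)) :=
          (isZero_zero D).of_iso (cokernel.ofEpi _)
        exact h1.of_iso (PreservesCokernel.iso q T'.arrow)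
  · rintro ⟨hT, hsub⟩
    refine ⟨fun {A} f hf => ⟨fun hiso h0 => ?_, fun hne => ?_⟩⟩
    · -- IsIso f and f = 0 leads to contradiction with ¬ P T
      apply hT
      refine (isZero_q_iff hP q T).mp ?_
      have hz : 𝟙 A = 0 := by
        have h2 := congrArg (fun g => g ≫ inv f) h0
        simpa using h2
      have hA : IsZero A := by rwa [IsZero.iff_id_eq_zero]
      exact hA.of_iso (asIso f).symm
    · -- f ≠ 0 implies IsIso f
      haveI := Localization.essSurj q (serreW P)
      set X := q.objPreimage A with hX
      set e : q.obj X ≅ A := q.objObjPreimageIso A with he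
      set μ : q.obj X ⟶ q.obj T := e.hom ≫ f with hμ
      haveI : Mono μ := mono_comp _ _
      have hμne : μ ≠ 0 := by
        intro h
        apply hne
        have : f = e.inv ≫ μ := by rw [hμ, Iso.inv_hom_id_assoc]
        rw [this, h, comp_zero]
      obtain ⟨φ, hφ⟩ := Localization.exists_leftFraction q (serreW P) μ
      set f' : X ⟶ φ.Y' := φ.f with hf'
      set s : T ⟶ φ.Y' := φ.s with hs'
      haveI hsiso : IsIso (q.map s) := Localization.inverts q (serreW P) s φ.hs
      set ι : Abelian.image f' ⟶ φ.Y' := Abelian.image.ι f' with hι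
      set e' : X ⟶ Abelian.image f' := Abelian.factorThruImage f' with he'
      have hfac : e' ≫ ι = f' := Abelian.image.fac f'
      -- the pullback
      haveI : Mono (pullback.fst s ι) := inferInstance
      -- q.map of the second projection is iso
      haveI : IsIso (pullback.snd (q.map s) (q.map ι)) := inferInstance
      have hsnd : IsIso (q.map (pullback.snd s ι)) := by
        rw [← PreservesPullback.iso_hom_snd q s ι]
        infer_instance
      -- key: μ ≫ q.map s = q.map f'
      have hμs : μ ≫ q.map s = q.map f' := by
        rw [hφ]; exact φ.map_comp_map_s q (Localization.inverts q (serreW P))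
      rcases hsub (Subobject.mk (pullback.fst s ι)) with hl | hr
      · -- P of the subobject: contradiction with μ ≠ 0
        exfalso
        apply hμne
        have hPBzero : IsZero (q.obj (pullback s ι)) := by
          refine (isZero_q_iff hP q _).mpr ?_
          exact pIso hP (Subobject.underlyingIso (pullback.fst s ι)) hl
        have hNzero : IsZero (q.obj (Abelian.image f')) :=
          hPBzero.of_iso (asIso (q.map (pullback.snd s ι))).symm
        have hqι : q.map ι = 0 := hNzero.eq_of_src _ _
        have hqf' : q.map f' = 0 := by
          rw [← hfac, q.map_comp, hqι, comp_zero]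
        have : μ ≫ q.map s = 0 := by rw [hμs, hqf']
        rwa [← cancel_mono (q.map s), zero_comp]
      · -- P of the cokernel: q.map fst is epi, hence μ is epi, hence iso
        have hcoker : P (cokernel (pullback.fst s ι)) := by
          refine pIso hP ?_ hr
          exact (cokernelIsoOfEq
              (Subobject.underlyingIso_hom_comp_eq_mk (pullback.fst s ι))).symm ≪≫
            cokernelEpiComp (Subobject.underlyingIso (pullback.fst s ι)).hom
              (pullback.fst s ι)
        have h1 : IsZero (cokernel (q.map (pullback.fst s ι))) :=
          (((isZero_q_iff hP q _).mpr hcoker).of_iso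
            (PreservesCokernel.iso q (pullback.fst s ι)).symm)
        haveI hepifst : Epi (q.map (pullback.fst s ι)) :=
          Preadditive.epi_of_isZero_cokernel _ h1
        have hcond : q.map (pullback.snd s ι) ≫ q.map ι =
            q.map (pullback.fst s ι) ≫ q.map s := by
          rw [← q.map_comp, ← q.map_comp, pullback.condition]
        haveI hepiι : Epi (q.map ι) := by
          have : Epi (q.map (pullback.snd s ι) ≫ q.map ι) := by
            rw [hcond]; exact epi_comp _ _
          exact epi_of_epi (q.map (pullback.snd s ι)) (q.map ι)
        haveI : Epi (q.map e') := inferInstance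
        haveI hepif' : Epi (q.map f') := by
          rw [← hfac, q.map_comp]; exact epi_comp _ _
        haveI hepiμ : Epi μ := by
          have h2 : μ = q.map f' ≫ inv (q.map s) := by
            rw [← hμs, Category.assoc, IsIso.hom_inv_id, Category.comp_id]
          rw [h2]; exact epi_comp _ _
        haveI : IsIso μ := isIso_of_mono_of_epi μ
        have : f = e.inv ≫ μ := by rw [hμ, Iso.inv_hom_id_assoc]
        rw [this]
        infer_instance


end KGPaper
end

section
/- Let C and D be skeletally small abelian categories with Krull–Gabriel filtrations (C_n)_{n∈ℕ} and (D_n)_{n∈ℕ}, and let F : C → D be an exact functor. Assume that (i) for every object U of D there exist an object T of C and an epimorphism ε : F(T) → U, and (ii) for all T in C and n ∈ ℕ, T ∈ C_n if and only if F(T) ∈ D_n. Then KG(C) = KG(D). -/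
open CategoryTheory Limits

universe v u v₂ u₂

namespace KGPaper

section Aux

variable {C : Type u} [Category.{v} C] [Abelian C]

lemma cok_congr (Q : C → Prop) {T : C} {a b a' b' : Subobject T} (ea : a = a') (eb : b = b')
    (h : a ≤ b) (h' : a' ≤ b') (hQ : Q (cokernel (Subobject.ofLE a b h))) :
    Q (cokernel (Subobject.ofLE a' b' h')) := by
  subst ea; subst eb; exact hQ

lemma subobject_eq_of_isZero_cokernel {T : C} {a b : Subobject T} (h : a ≤ b)
    (hz : IsZero (cokernel (Subobject.ofLE a b h))) : a = b := by
  haveI : Epi (Subobject.ofLE a b h) := Preadditive.epi_of_isZero_cokernel _ hz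
  haveI : IsIso (Subobject.ofLE a b h) := isIso_of_mono_of_epi _
  refine le_antisymm h (Subobject.le_of_comm (inv (Subobject.ofLE a b h)) ?_)
  rw [IsIso.inv_comp_eq, Subobject.ofLE_arrow]

lemma imageSubobject_eq_top_of_epi {X Y : C} (f : X ⟶ Y) [Epi f] :
    imageSubobject f = ⊤ := by
  haveI : Epi (image.ι f) := epi_image_of_epi f
  haveI : IsIso (image.ι f) := isIso_of_mono_of_epi _
  exact (Subobject.isIso_iff_mk_eq_top _).mp inferInstance

lemma simple_or_isZero_of_epi {X Y : C} (f : X ⟶ Y) [Epi f] (hX : Simple X) :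
    Simple Y ∨ IsZero Y := by
  by_cases hk : kernel.ι f = 0
  · haveI : Mono f := Abelian.mono_of_kernel_ι_eq_zero f hk
    haveI : IsIso f := isIso_of_mono_of_epi f
    exact Or.inl (Simple.of_iso (asIso f).symm)
  · haveI : IsIso (kernel.ι f) := (hX.mono_isIso_iff_nonzero (kernel.ι f)).mpr hk
    have hf : f = 0 := by
      have := kernel.condition f
      rwa [← cancel_epi (kernel.ι f), comp_zero]
    refine Or.inr ?_
    rw [IsZero.iff_id_eq_zero, ← cancel_epi f, hf, zero_comp, comp_zero]

/-- Collapsing a chain with simple-or-zero quotients to a composition series. -/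
lemma finiteLength_of_chain :
    ∀ (n : ℕ) (T : C) (c : Fin (n + 1) → Subobject T)
      (hc : ∀ i : Fin n, c i.castSucc ≤ c i.succ),
      c 0 = ⊥ → c (Fin.last n) = ⊤ →
      (∀ i : Fin n, Simple (cokernel (Subobject.ofLE _ _ (hc i))) ∨
        IsZero (cokernel (Subobject.ofLE _ _ (hc i)))) →
      FiniteLength T := by
  intro n
  induction n with
  | zero =>
    intro T c hc h0 hl _
    exact ⟨0, c, hc, h0, hl, fun i => i.elim0⟩
  | succ n ih =>
    intro T c hc h0 hl hq
    by_cases hall : ∀ i : Fin (n + 1), Simple (cokernel (Subobject.ofLE _ _ (hc i)))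
    · exact ⟨n + 1, c, hc, h0, hl, hall⟩
    · push_neg at hall
      obtain ⟨i, hi⟩ := hall
      have hz : IsZero (cokernel (Subobject.ofLE _ _ (hc i))) := (hq i).resolve_left hi
      have heq : c i.castSucc = c i.succ := subobject_eq_of_isZero_cokernel _ hz
      set c' : Fin (n + 1) → Subobject T :=
        fun j => c ⟨(j : ℕ) + (if (j : ℕ) ≤ (i : ℕ) then 0 else 1),
          by have := j.isLt; split_ifs <;> omega⟩ with hc'def
      have key : ∀ j : Fin n, ∃ k : Fin (n + 1),
          c' j.castSucc = c k.castSucc ∧ c' j.succ = c k.succ := by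
        intro j
        rcases lt_trichotomy ((j : ℕ) + 1) ((i : ℕ) + 1) with h1 | h1 | h1
        · refine ⟨j.castSucc, ?_, ?_⟩ <;>
          · refine congrArg c (Fin.ext ?_)
            simp only [hc'def, Fin.coe_castSucc, Fin.val_succ]
            split_ifs <;> omega
        · have h1' : (j : ℕ) = (i : ℕ) := by omega
          refine ⟨j.succ, ?_, ?_⟩
          · have e : c' j.castSucc = c i.castSucc := by
              refine congrArg c (Fin.ext ?_)
              simp only [hc'def, Fin.coe_castSucc]
              split_ifs <;> omega
            rw [e, heq]
            refine congrArg c (Fin.ext ?_)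
            simp only [Fin.coe_castSucc, Fin.val_succ]
            omega
          · refine congrArg c (Fin.ext ?_)
            simp only [hc'def, Fin.coe_castSucc, Fin.val_succ]
            split_ifs <;> omega
        · refine ⟨j.succ, ?_, ?_⟩ <;>
          · refine congrArg c (Fin.ext ?_)
            simp only [hc'def, Fin.coe_castSucc, Fin.val_succ]
            split_ifs <;> omega
      have hc'' : ∀ j : Fin n, c' j.castSucc ≤ c' j.succ := by
        intro j
        obtain ⟨k, e1, e2⟩ := key j
        rw [e1, e2]; exact hc k
      have h0' : c' 0 = ⊥ := by
        rw [← h0]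
        refine congrArg c (Fin.ext ?_)
        simp only [hc'def, Fin.val_zero]
        simp
      have hl' : c' (Fin.last n) = ⊤ := by
        by_cases hni : (n : ℕ) ≤ (i : ℕ)
        · have e : c' (Fin.last n) = c i.castSucc := by
            refine congrArg c (Fin.ext ?_)
            simp only [hc'def, Fin.val_last, Fin.coe_castSucc]
            have := i.isLt
            split_ifs <;> omega
          rw [e, heq, ← hl]
          refine congrArg c (Fin.ext ?_)
          simp only [Fin.val_succ, Fin.val_last]
          have := i.isLt
          omega
        · rw [← hl]
          refine congrArg c (Fin.ext ?_)
          simp only [hc'def, Fin.val_last]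
          split_ifs <;> omega
      refine ih T c' hc'' h0' hl' ?_
      intro j
      obtain ⟨k, e1, e2⟩ := key j
      exact cok_congr (fun Z => Simple Z ∨ IsZero Z) e1.symm e2.symm (hc k) (hc'' j) (hq k)

/-- The image of a subobject along a morphism. -/
noncomputable abbrev pushSub {X U : C} (p : X ⟶ U) (a : Subobject X) : Subobject U :=
  imageSubobject (a.arrow ≫ p)

lemma pushSub_mono {X U : C} (p : X ⟶ U) {a b : Subobject X} (h : a ≤ b) :
    pushSub p a ≤ pushSub p b := by
  refine imageSubobject_le _ (Subobject.ofLE a b h ≫ factorThruImageSubobject (b.arrow ≫ p)) ?_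
  rw [Category.assoc, imageSubobject_arrow_comp, ← Category.assoc, Subobject.ofLE_arrow]

lemma pushSub_square {X U : C} (p : X ⟶ U) {a b : Subobject X} (h : a ≤ b) :
    Subobject.ofLE a b h ≫ factorThruImageSubobject (b.arrow ≫ p) =
      factorThruImageSubobject (a.arrow ≫ p) ≫
        Subobject.ofLE _ _ (pushSub_mono p h) := by
  rw [← cancel_mono (pushSub p b).arrow]
  simp only [Category.assoc, Subobject.ofLE_arrow, imageSubobject_arrow_comp]
  rw [← Category.assoc, Subobject.ofLE_arrow]

lemma pushSub_quot_epi {X U : C} (p : X ⟶ U) {a b : Subobject X} (h : a ≤ b) :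
    ∃ e : cokernel (Subobject.ofLE a b h) ⟶
        cokernel (Subobject.ofLE _ _ (pushSub_mono p h)), Epi e := by
  refine ⟨cokernel.desc _ (factorThruImageSubobject (b.arrow ≫ p) ≫ cokernel.π _) ?_, ?_⟩
  · rw [← Category.assoc, pushSub_square p h, Category.assoc, cokernel.condition, comp_zero]
  · have fac : cokernel.π (Subobject.ofLE a b h) ≫
        cokernel.desc _ (factorThruImageSubobject (b.arrow ≫ p) ≫ cokernel.π _)
          (by rw [← Category.assoc, pushSub_square p h, Category.assoc,
                cokernel.condition, comp_zero]) =
        factorThruImageSubobject (b.arrow ≫ p) ≫ cokernel.π _ := cokernel.π_desc _ _ _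
    exact epi_of_epi_fac fac

/-- A quotient of a finite length object has finite length. -/
lemma finiteLength_of_epi {X U : C} (p : X ⟶ U) [Epi p] (hX : FiniteLength X) :
    FiniteLength U := by
  obtain ⟨n, c, hc, h0, hl, hq⟩ := hX
  have hd : ∀ i : Fin n, pushSub p (c i.castSucc) ≤ pushSub p (c i.succ) :=
    fun i => pushSub_mono p (hc i)
  refine finiteLength_of_chain n U (fun i => pushSub p (c i)) hd ?_ ?_ ?_
  · show pushSub p (c 0) = ⊥
    have : pushSub p (c 0) ≤ ⊥ := by
      rw [h0]
      refine imageSubobject_le _ 0 ?_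
      simp [Subobject.bot_arrow]
    exact le_bot_iff.mp this
  · show pushSub p (c (Fin.last n)) = ⊤
    rw [hl]
    haveI : Epi ((⊤ : Subobject X).arrow ≫ p) := epi_comp _ _
    exact imageSubobject_eq_top_of_epi _
  · intro i
    obtain ⟨e, he⟩ := pushSub_quot_epi p (hc i)
    haveI := he
    exact simple_or_isZero_of_epi e (hq i)

/-- Finite length in a Gabriel quotient is inherited by epimorphic images. -/
lemma FiniteLengthInQuotient.of_epi {P : C → Prop} {X U : C} (f : X ⟶ U) (hf : Epi f)
    (h : FiniteLengthInQuotient P X) : FiniteLengthInQuotient P U := by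
  obtain ⟨D', catD', abD', q, add, pl, pc, loc, hfl⟩ := h
  haveI := hf
  haveI := pc
  haveI : Epi (q.map f) := preserves_epi_of_preservesColimit q f
  exact ⟨D', catD', abD', q, add, pl, pc, loc, finiteLength_of_epi (q.map f) hfl⟩

lemma kgFilt_of_epi (m : ℕ) {X U : C} (f : X ⟶ U) (hf : Epi f)
    (h : kgFilt C m X) : kgFilt C m U := by
  cases m with
  | zero => exact FiniteLengthInQuotient.of_epi f hf h
  | succ n => exact FiniteLengthInQuotient.of_epi f hf h

end Aux

end KGPaper

namespace KGPaper

/-- Let `C`, `D` be skeletally small abelian categories with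
Krull-Gabriel filtrations `(C_n)`, `(D_n)` and let `F : C ⥤ D` be an exact functor.
Assume (i) every object `U` of `D` admits an epimorphism `ε : F(T) → U` with `T` in
`C`, and (ii) `T ∈ C_n` if and only if `F(T) ∈ D_n`, for all `T` and `n`.
Then `KG(C) = KG(D)`. -/
theorem kgDim_eq_of_exact_functor
    {C : Type u} [Category.{v} C] [Abelian C] [EssentiallySmall.{v} C]
    {D : Type u₂} [Category.{v₂} D] [Abelian D] [EssentiallySmall.{v₂} D]
    (F : C ⥤ D) [F.Additive] [PreservesFiniteLimits F] [PreservesFiniteColimits F]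
    (hsurj : ∀ U : D, ∃ (T : C) (ε : F.obj T ⟶ U), Epi ε)
    (hiff : ∀ (T : C) (n : ℕ), kgFilt C n T ↔ kgFilt D n (F.obj T)) :
    kgDim C = kgDim D := by
  have hset : { m : ℕ | ∀ T : C, kgFilt C m T } = { m : ℕ | ∀ U : D, kgFilt D m U } := by
    ext m
    simp only [Set.mem_setOf_eq]
    constructor
    · intro h U
      obtain ⟨T, ε, hε⟩ := hsurj U
      exact kgFilt_of_epi m ε hε ((hiff T m).1 (h T))
    · intro h T
      exact (hiff T m).2 (h (F.obj T))
  unfold kgDim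
  rw [hset]

end KGPaper
end

section
/- Let R be a locally bounded K-category and B a convex full subcategory of R. Then mod(B), identified with its image in mod(R) under the (fully faithful, exact) extension-by-zeros functor, is a contravariantly finite subcategory of mod(R). -/
open CategoryTheory Limits Opposite

universe u

namespace KGPaper

/-! ### Locally bounded `K`-categories and their finite dimensional modules -/

/-- A locally bounded `K`-category: a `K`-linear category in which distinct objects are
nonisomorphic, all endomorphism algebras are local, and for every object `x` both
`∑_y dim_K R(x,y)` and `∑_y dim_K R(y,x)` are finite (i.e. all hom spaces are finite
dimensional and, for fixed `x`, only finitely many of them are nonzero). -/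
class LocallyBounded (K : Type u) [Field K] (R : Type u) [Category.{u} R]
    [Preadditive R] [CategoryTheory.Linear K R] : Prop where
  eq_of_iso : ∀ {x y : R}, Nonempty (x ≅ y) → x = y
  localEnd : ∀ x : R, IsLocalRing (End x)
  finiteDimensionalHom : ∀ x y : R, FiniteDimensional K (x ⟶ y)
  finiteOut : ∀ x : R, {y : R | ∃ f : x ⟶ y, f ≠ 0}.Finite
  finiteIn : ∀ x : R, {y : R | ∃ f : y ⟶ x, f ≠ 0}.Finite

/-- The category `Mod(R)` of all right `R`-modules, i.e. contravariant `K`-linear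
functors from `R` to `K`-vector spaces. -/
abbrev BigMod (K : Type u) [Field K] (R : Type u) [Category.{u} R] :=
  Rᵒᵖ ⥤ ModuleCat.{u} K

/-- An `R`-module is finite dimensional if it is additive and `K`-linear, all its values
are finite dimensional and only finitely many of them are nonzero
(so that `∑_x dim_K M(x) < ∞`). -/
def IsFdModule (K : Type u) [Field K] {R : Type u} [Category.{u} R]
    [Preadditive R] [CategoryTheory.Linear K R] (M : BigMod K R) : Prop :=
  M.Additive ∧ (∀ {x y : R} (c : K) (f : x ⟶ y), M.map ((c • f).op) = c • M.map f.op) ∧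
    (∀ x : Rᵒᵖ, FiniteDimensional K (M.obj x)) ∧
    {x : R | ¬ IsZero (M.obj (op x))}.Finite

/-- The category `mod(R)` of finite dimensional `R`-modules. -/
abbrev FdMod (K : Type u) [Field K] (R : Type u) [Category.{u} R]
    [Preadditive R] [CategoryTheory.Linear K R] :=
  ObjectProperty.FullSubcategory (IsFdModule K (R := R))

end KGPaper

namespace KGPaper

variable (K : Type u) [Field K]

/-- A full subcategory (given by a set `B` of objects) of a `K`-category `R` is convex
if every path of nonzero morphisms between objects of `B` has all its intermediate
points in `B`. -/
def Convex {R : Type u} [Category.{u} R] [Preadditive R] (B : Set R) : Prop :=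
  ∀ (n : ℕ) (z : Fin (n + 2) → R), z 0 ∈ B → z (Fin.last (n + 1)) ∈ B →
    (∀ i : Fin (n + 1), ∃ f : z i.castSucc ⟶ z i.succ, f ≠ 0) → ∀ i, z i ∈ B

/-- A full subcategory `X` (given as a set of objects) of `mod(R)` is contravariantly
finite if for every `M ∈ mod(R)` there are finitely many homomorphisms `αᵢ : Xᵢ ⟶ M`
with `Xᵢ ∈ X` such that every homomorphism `f : Y ⟶ M` with `Y ∈ X` factors through
`[α₁ ... αₙ] : ⊕ᵢ Xᵢ ⟶ M`, i.e. `f = ∑ᵢ hᵢ ≫ αᵢ` for suitable `hᵢ : Y ⟶ Xᵢ`. -/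
def ContravariantlyFinite (R : Type u) [Category.{u} R]
    [Preadditive R] [CategoryTheory.Linear K R] (X : Set (FdMod K R)) : Prop :=
  ∀ M : FdMod K R, ∃ (n : ℕ) (Xi : Fin n → FdMod K R) (α : ∀ i, Xi i ⟶ M),
    (∀ i, Xi i ∈ X) ∧
    ∀ Y ∈ X, ∀ f : Y ⟶ M, ∃ h : ∀ i, Y ⟶ Xi i, f = ∑ i, h i ≫ α i

end KGPaper

set_option linter.unusedSectionVars false

namespace KGPaper

variable {K R : Type u} [Field K] [Category.{u} R] [Preadditive R]
    [CategoryTheory.Linear K R]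

/-- The largest submodule of `M` supported on `B`, pointwise. -/
def traceSub (B : Set R) (M : Rᵒᵖ ⥤ ModuleCat.{u} K) (x : Rᵒᵖ) :
    Submodule K (M.obj x) where
  carrier := {m | ∀ (y : R) (g : y ⟶ unop x), y ∉ B → M.map g.op m = 0}
  add_mem' := fun ha hb y g hy => by rw [map_add, ha y g hy, hb y g hy, add_zero]
  zero_mem' := fun y g hy => map_zero _
  smul_mem' := fun c m hm y g hy => by rw [map_smul, hm y g hy, smul_zero]


lemma subsingleton_of_isZero {N : ModuleCat.{u} K} (h : IsZero N) : Subsingleton N := by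
  constructor
  intro a b
  have h1 : (𝟙 N : N ⟶ N) = 0 := h.eq_of_src _ _
  have ha : a = (𝟙 N : N ⟶ N) a := rfl
  have hb : b = (𝟙 N : N ⟶ N) b := rfl
  rw [ha, hb, h1]
  rfl

lemma traceSub_mapMem (B : Set R) (M : Rᵒᵖ ⥤ ModuleCat.{u} K) {x y : Rᵒᵖ}
    (f : x ⟶ y) (m : M.obj x) (hm : m ∈ traceSub B M x) :
    M.map f m ∈ traceSub B M y := by
  intro z g hz
  have h1 : M.map g.op (M.map f m) = M.map (f ≫ g.op) m := by
    rw [M.map_comp]; rfl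
  rw [h1, show f ≫ g.op = (g ≫ f.unop).op from rfl]
  exact hm z (g ≫ f.unop) hz

/-- The largest subfunctor of `M` supported on `B`. -/
def traceFunctor (B : Set R) (M : Rᵒᵖ ⥤ ModuleCat.{u} K) : Rᵒᵖ ⥤ ModuleCat.{u} K where
  obj x := ModuleCat.of K (traceSub B M x)
  map {x y} f := ModuleCat.ofHom ((M.map f).hom.restrict (fun m hm => traceSub_mapMem B M f m hm))
  map_id x := by
    apply ModuleCat.hom_ext; apply LinearMap.ext; intro m; apply Subtype.ext
    show M.map (𝟙 x) m.1 = m.1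
    rw [M.map_id]; rfl
  map_comp {x y z} f g := by
    apply ModuleCat.hom_ext; apply LinearMap.ext; intro m; apply Subtype.ext
    show M.map (f ≫ g) m.1 = M.map g (M.map f m.1)
    rw [M.map_comp]; rfl

lemma isFdModule_traceFunctor (B : Set R) (M : BigMod K R) (hM : IsFdModule K M) :
    IsFdModule K (traceFunctor B M) := by
  obtain ⟨hAdd, hLin, hFd, hFin⟩ := hM
  refine ⟨⟨?_⟩, ?_, ?_, ?_⟩
  · intro x y f g
    apply ModuleCat.hom_ext; apply LinearMap.ext; intro m; apply Subtype.ext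
    show M.map (f + g) m.1 = M.map f m.1 + M.map g m.1
    haveI := hAdd
    rw [M.map_add]; rfl
  · intro x y c f
    apply ModuleCat.hom_ext; apply LinearMap.ext; intro m; apply Subtype.ext
    show M.map ((c • f).op) m.1 = c • (M.map f.op m.1)
    rw [hLin c f]; rfl
  · intro x
    haveI := hFd x
    exact FiniteDimensional.finiteDimensional_submodule (traceSub B M x)
  · refine hFin.subset ?_
    intro x hx
    simp only [Set.mem_setOf_eq] at hx ⊢
    intro hz
    apply hx
    haveI : Subsingleton (M.obj (op x)) :=
      subsingleton_of_isZero hz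
    haveI : Subsingleton (traceSub B M (op x)) := ⟨fun a b => Subtype.ext (Subsingleton.elim _ _)⟩
    have : IsZero (ModuleCat.of K (traceSub B M (op x))) := @ModuleCat.isZero_of_subsingleton _ _ _ this
    exact this

lemma traceFunctor_vanishes (B : Set R) (M : BigMod K R) (x : R) (hx : x ∉ B) :
    IsZero ((traceFunctor B M).obj (op x)) := by
  haveI : Subsingleton (traceSub B M (op x)) := by
    constructor
    intro a b
    apply Subtype.ext
    have ha : a.1 = 0 := by
      have := a.2 x (𝟙 x) hx
      rwa [show (𝟙 x).op = 𝟙 (op x) from rfl, M.map_id] at this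
    have hb : b.1 = 0 := by
      have := b.2 x (𝟙 x) hx
      rwa [show (𝟙 x).op = 𝟙 (op x) from rfl, M.map_id] at this
    rw [ha, hb]
  have : IsZero (ModuleCat.of K (traceSub B M (op x))) := @ModuleCat.isZero_of_subsingleton _ _ _ this
  exact this

/-- The inclusion of the trace subfunctor. -/
def traceInclusion (B : Set R) (M : Rᵒᵖ ⥤ ModuleCat.{u} K) : traceFunctor B M ⟶ M where
  app x := ModuleCat.ofHom (traceSub B M x).subtype
  naturality x y f := by
    apply ModuleCat.hom_ext; apply LinearMap.ext; intro m; rfl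

end KGPaper

namespace KGPaper

/-- Let `R` be a locally bounded `K`-category (`K` algebraically
closed) and `B` a convex full subcategory of `R`.  Then `mod(B)`, identified with its
image in `mod(R)` under the fully faithful exact extension-by-zeros functor — that is,
the full subcategory of `mod(R)` of all modules vanishing on all objects outside of
`B` — is a contravariantly finite subcategory of `mod(R)`. -/
theorem contravariantlyFinite_of_convex
    (K R : Type u) [Field K] [IsAlgClosed K] [Category.{u} R] [Preadditive R]
    [CategoryTheory.Linear K R] [LocallyBounded K R]
    (B : Set R) (hB : Convex B) :
    ContravariantlyFinite K R
      {M : FdMod K R | ∀ x : R, x ∉ B → IsZero (M.obj.obj (op x))} := by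
  intro M
  refine ⟨1, fun _ => ⟨traceFunctor B M.obj, isFdModule_traceFunctor B M.obj M.2⟩,
    fun _ => ⟨traceInclusion B M.obj⟩, fun _ => fun x hx => traceFunctor_vanishes B M.obj x hx,
    ?_⟩
  intro Y hY f
  have hmem : ∀ (x : Rᵒᵖ) (u : Y.obj.obj x), f.hom.app x u ∈ traceSub B M.obj x := by
    intro x u z g hz
    have hnat : M.obj.map g.op (f.hom.app x u) = f.hom.app (op z) (Y.obj.map g.op u) :=
      (ConcreteCategory.congr_hom (f.hom.naturality g.op) u).symm
    rw [hnat]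
    haveI : Subsingleton (Y.obj.obj (op z)) :=
      subsingleton_of_isZero (hY z hz)
    rw [Subsingleton.elim (Y.obj.map g.op u) 0, map_zero]
  refine ⟨fun _ => ?_, ?_⟩
  · exact ⟨
      { app := fun x => ModuleCat.ofHom (LinearMap.codRestrict (traceSub B M.obj x) (f.hom.app x).hom (hmem x))
        naturality := by
          intro x y g
          apply ModuleCat.hom_ext; apply LinearMap.ext; intro u; apply Subtype.ext
          show f.hom.app y (Y.obj.map g u) = M.obj.map g (f.hom.app x u)
          exact ConcreteCategory.congr_hom (f.hom.naturality g) u }⟩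
  · rw [Fin.sum_univ_one]
    apply InducedCategory.hom_ext
    apply NatTrans.ext
    funext x
    apply ModuleCat.hom_ext; apply LinearMap.ext; intro u
    rfl

end KGPaper
end
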